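/- With the action and coaction of Proposition 3.3 (h·a = (S(h₁)α⁻¹(a))α(h₂), ρ(h) = α(h₁₂)⊗S(h₁₁)α⁻¹(h₂)), condition (a) holds: for all h,a ∈ H, Δ(h·a) = Σ α(h₁_(0))·a₁ ⊗ α(h₁_(1))(α⁻¹(h₂)·α⁻¹(a₂)). -/

import Mathlib

open TensorProduct LinearMap

/-- A unital monoidal Hom-associative algebra. -/
structure HomAlg (k : Type*) [Field k] (A : Type*) [AddCommGroup A] [Module k A] where
  au : A ≃ₗ[k] A
  mul : A →ₗ[k] A →ₗ[k] A
  one : A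
  hom_assoc : ∀ x y z : A, mul (au x) (mul y z) = mul (mul x y) (au z)
  one_mul' : ∀ x : A, mul one x = au x
  mul_one' : ∀ x : A, mul x one = au x
  au_mul : ∀ x y : A, au (mul x y) = mul (au x) (au y)
  au_one : au one = one

/-- A counital monoidal Hom-coassociative coalgebra. -/
structure HomCoalg (k : Type*) [Field k] (C : Type*) [AddCommGroup C] [Module k C] where
  au : C ≃ₗ[k] C
  comul : C →ₗ[k] C ⊗[k] C
  counit : C →ₗ[k] k
  hom_coassoc : (TensorProduct.map au.symm.toLinearMap comul) ∘ₗ comul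
    = (TensorProduct.assoc k C C C).toLinearMap ∘ₗ (TensorProduct.map comul au.symm.toLinearMap) ∘ₗ comul
  counit_comul : ∀ c : C,
    (TensorProduct.lid k C) ((TensorProduct.map counit LinearMap.id) (comul c)) = au.symm c
  comul_counit : ∀ c : C,
    (TensorProduct.rid k C) ((TensorProduct.map LinearMap.id counit) (comul c)) = au.symm c
  comul_au : ∀ c : C, comul (au c) = (TensorProduct.map au.toLinearMap au.toLinearMap) (comul c)
  counit_au : ∀ c : C, counit (au c) = counit c

/-- A monoidal Hom-bialgebra. -/
structure HomBialg (k : Type*) [Field k] (H : Type*) [AddCommGroup H] [Module k H]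
    extends HomAlg k H, HomCoalg k H where
  comul_mul : ∀ x y : H, comul (mul x y)
    = (TensorProduct.map (TensorProduct.lift mul) (TensorProduct.lift mul))
        ((TensorProduct.tensorTensorTensorComm k H H H H) (comul x ⊗ₜ[k] comul y))
  comul_one : comul one = one ⊗ₜ[k] one
  counit_mul : ∀ x y : H, counit (mul x y) = counit x * counit y
  counit_one : counit one = 1

/-- A monoidal Hom-Hopf algebra. -/
structure HomHopf (k : Type*) [Field k] (H : Type*) [AddCommGroup H] [Module k H]
    extends HomBialg k H where
  S : H →ₗ[k] H
  S_au : S ∘ₗ au.toLinearMap = au.toLinearMap ∘ₗ S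
  S_mul_id : ∀ x : H,
    TensorProduct.lift mul ((TensorProduct.map S LinearMap.id) (comul x)) = counit x • one
  id_mul_S : ∀ x : H,
    TensorProduct.lift mul ((TensorProduct.map LinearMap.id S) (comul x)) = counit x • one

/-- The Hom-smash coproduct comultiplication on `B ⊗ H`:
`Δ(a # h) = Σ a₁ # α(h₁₍₀₎) ⊗ β⁻¹(a₂)·h₁₍₁₎ # h₂`. -/
noncomputable def smashComul {k : Type*} [Field k] {B H : Type*}
    [AddCommGroup B] [Module k B] [AddCommGroup H] [Module k H]
    (βB : B ≃ₗ[k] B) (mulB : B →ₗ[k] B →ₗ[k] B) (comulB : B →ₗ[k] B ⊗[k] B)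
    (αH : H ≃ₗ[k] H) (comulH : H →ₗ[k] H ⊗[k] H) (ρ : H →ₗ[k] H ⊗[k] B) :
    B ⊗[k] H →ₗ[k] (B ⊗[k] H) ⊗[k] (B ⊗[k] H) :=
  (TensorProduct.map
      (LinearMap.lTensor B αH.toLinearMap)
      ((LinearMap.rTensor H (TensorProduct.lift (mulB ∘ₗ βB.symm.toLinearMap)))
        ∘ₗ (TensorProduct.assoc k B B H).symm.toLinearMap))
  ∘ₗ (TensorProduct.tensorTensorTensorComm k B B H (B ⊗[k] H)).toLinearMap
  ∘ₗ (LinearMap.lTensor (B ⊗[k] B)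
        ((TensorProduct.assoc k H B H).toLinearMap ∘ₗ (LinearMap.rTensor H ρ)))
  ∘ₗ (TensorProduct.map comulB comulH)

/-- The Hom-smash counit `ε(a # h) = ε_B(a) ε_H(h)` on `B ⊗ H`. -/
noncomputable def smashCounit {k : Type*} [Field k] {B H : Type*}
    [AddCommGroup B] [Module k B] [AddCommGroup H] [Module k H]
    (counitB : B →ₗ[k] k) (counitH : H →ₗ[k] k) : B ⊗[k] H →ₗ[k] k :=
  (LinearMap.mul' k k) ∘ₗ (TensorProduct.map counitB counitH)

section Bicross

variable {k : Type*} [Field k] {B H : Type*}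
  [AddCommGroup B] [Module k B] [AddCommGroup H] [Module k H]

/-- The Hom-smash product multiplication on `B ⊗ H` (as a map on the tensor square):
`(a # h)(b # g) = Σ a(h₁ · β⁻¹(b)) # α(h₂)g`. -/
noncomputable def smashMulT
    (βB : B ≃ₗ[k] B) (mulB : B →ₗ[k] B →ₗ[k] B)
    (αH : H ≃ₗ[k] H) (mulH : H →ₗ[k] H →ₗ[k] H) (comulH : H →ₗ[k] H ⊗[k] H)
    (act : H →ₗ[k] B →ₗ[k] B) :
    (B ⊗[k] H) ⊗[k] (B ⊗[k] H) →ₗ[k] B ⊗[k] H :=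
  (TensorProduct.map
      ((TensorProduct.lift mulB)
        ∘ₗ (LinearMap.lTensor B ((TensorProduct.lift act) ∘ₗ (LinearMap.lTensor H βB.symm.toLinearMap)))
        ∘ₗ (TensorProduct.assoc k B H B).toLinearMap)
      (TensorProduct.lift (mulH ∘ₗ αH.toLinearMap)))
  ∘ₗ (TensorProduct.tensorTensorTensorComm k (B ⊗[k] H) H B H).toLinearMap
  ∘ₗ (LinearMap.rTensor (B ⊗[k] H)
        ((TensorProduct.assoc k B H H).symm.toLinearMap ∘ₗ (LinearMap.lTensor B comulH)))

/-- Bicrossproduct condition (a):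
`Δ_B(h·b) = Σ α(h₁₍₀₎)·b₁ ⊗ β(h₁₍₁₎)(α⁻¹(h₂)·β⁻¹(b₂))`. -/
noncomputable def bicrossCondA
    (βB : B ≃ₗ[k] B) (mulB : B →ₗ[k] B →ₗ[k] B) (comulB : B →ₗ[k] B ⊗[k] B)
    (αH : H ≃ₗ[k] H) (comulH : H →ₗ[k] H ⊗[k] H)
    (act : H →ₗ[k] B →ₗ[k] B) (ρ : H →ₗ[k] H ⊗[k] B) : Prop :=
  ∀ (h : H) (b : B), comulB (act h b)
    = ((LinearMap.lTensor B (TensorProduct.lift mulB))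
        ∘ₗ (TensorProduct.assoc k B B B).toLinearMap
        ∘ₗ (TensorProduct.map
             ((TensorProduct.map (TensorProduct.lift (act ∘ₗ αH.toLinearMap)) βB.toLinearMap)
               ∘ₗ (TensorProduct.assoc k H B B).symm.toLinearMap
               ∘ₗ (LinearMap.lTensor H (TensorProduct.comm k B B).toLinearMap)
               ∘ₗ (TensorProduct.assoc k H B B).toLinearMap
               ∘ₗ (LinearMap.rTensor B ρ))
             ((TensorProduct.lift act)
               ∘ₗ (TensorProduct.map αH.symm.toLinearMap βB.symm.toLinearMap)))
        ∘ₗ (TensorProduct.tensorTensorTensorComm k H H B B).toLinearMap)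
      (comulH h ⊗ₜ[k] comulB b)

/-- Bicrossproduct condition (d):
`Σ h₂₍₀₎ ⊗ (h₁·b)β²(h₂₍₁₎) = Σ h₁₍₀₎ ⊗ β²(h₁₍₁₎)(h₂·b)`. -/
noncomputable def bicrossCondD
    (βB : B ≃ₗ[k] B) (mulB : B →ₗ[k] B →ₗ[k] B)
    (αH : H ≃ₗ[k] H) (comulH : H →ₗ[k] H ⊗[k] H)
    (act : H →ₗ[k] B →ₗ[k] B) (ρ : H →ₗ[k] H ⊗[k] B) : Prop :=
  ∀ (h : H) (b : B),
    ((LinearMap.lTensor H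
        ((TensorProduct.lift (mulB ∘ₗ act.flip b))
          ∘ₗ (LinearMap.lTensor H (βB.toLinearMap ∘ₗ βB.toLinearMap))))
      ∘ₗ (TensorProduct.assoc k H H B).toLinearMap
      ∘ₗ (LinearMap.rTensor B (TensorProduct.comm k H H).toLinearMap)
      ∘ₗ (TensorProduct.assoc k H H B).symm.toLinearMap
      ∘ₗ (LinearMap.lTensor H ρ)) (comulH h)
    = ((LinearMap.lTensor H
          ((TensorProduct.lift (mulB ∘ₗ (βB.toLinearMap ∘ₗ βB.toLinearMap)))
            ∘ₗ (LinearMap.lTensor B (act.flip b))))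
        ∘ₗ (TensorProduct.assoc k H B H).toLinearMap
        ∘ₗ (LinearMap.rTensor H ρ)) (comulH h)

/-- Bicrossproduct condition (e):
`ρ(hg) = Σ α(h₁₍₀₎)g₍₀₎ ⊗ β(h₁₍₁₎)(α⁻¹(h₂)·β⁻¹(g₍₁₎))`.
The multiplications of `H` used on the two sides are passed separately (`mulH'`, `mulH`),
so that the same formula covers the opposite-algebra case. -/
noncomputable def bicrossCondE
    (βB : B ≃ₗ[k] B) (mulB : B →ₗ[k] B →ₗ[k] B)
    (αH : H ≃ₗ[k] H) (mulH : H →ₗ[k] H →ₗ[k] H) (comulH : H →ₗ[k] H ⊗[k] H)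
    (act : H →ₗ[k] B →ₗ[k] B) (ρ : H →ₗ[k] H ⊗[k] B) : Prop :=
  ∀ (h g : H), ρ (mulH h g)
    = ((LinearMap.lTensor H (TensorProduct.lift mulB))
        ∘ₗ (TensorProduct.assoc k H B B).toLinearMap
        ∘ₗ (TensorProduct.map
              ((TensorProduct.map (TensorProduct.lift (mulH ∘ₗ αH.toLinearMap)) βB.toLinearMap)
                ∘ₗ (TensorProduct.assoc k H H B).symm.toLinearMap
                ∘ₗ (LinearMap.lTensor H (TensorProduct.comm k B H).toLinearMap)
                ∘ₗ (TensorProduct.assoc k H B H).toLinearMap)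
              ((TensorProduct.lift act)
                ∘ₗ (TensorProduct.map αH.symm.toLinearMap βB.symm.toLinearMap)))
        ∘ₗ (TensorProduct.tensorTensorTensorComm k (H ⊗[k] B) H H B).toLinearMap
        ∘ₗ (LinearMap.rTensor (H ⊗[k] B) (LinearMap.rTensor H ρ)))
      (comulH h ⊗ₜ[k] ρ g)

end Bicross
section Adjoint

variable {k : Type*} [Field k] {H : Type*} [AddCommGroup H] [Module k H]

/-- The action `h · a = Σ (S(h₁)α⁻¹(a))α(h₂)` of `H^op` on `H` (tensor form). -/
noncomputable def adActT (αH : H ≃ₗ[k] H) (mul : H →ₗ[k] H →ₗ[k] H)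
    (comul : H →ₗ[k] H ⊗[k] H) (S : H →ₗ[k] H) : H ⊗[k] H →ₗ[k] H :=
  (TensorProduct.lift mul)
  ∘ₗ (TensorProduct.map
        ((TensorProduct.lift (mul ∘ₗ S)) ∘ₗ (LinearMap.lTensor H αH.symm.toLinearMap))
        αH.toLinearMap)
  ∘ₗ (TensorProduct.assoc k H H H).symm.toLinearMap
  ∘ₗ (LinearMap.lTensor H (TensorProduct.comm k H H).toLinearMap)
  ∘ₗ (TensorProduct.assoc k H H H).toLinearMap
  ∘ₗ (LinearMap.rTensor H comul)

/-- The action `h · a = Σ (S(h₁)α⁻¹(a))α(h₂)` of `H^op` on `H` (curried form). -/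
noncomputable def adAct (αH : H ≃ₗ[k] H) (mul : H →ₗ[k] H →ₗ[k] H)
    (comul : H →ₗ[k] H ⊗[k] H) (S : H →ₗ[k] H) : H →ₗ[k] H →ₗ[k] H :=
  TensorProduct.curry (adActT αH mul comul S)

/-- The coaction `ρ(h) = Σ α(h₁₂) ⊗ S(h₁₁)α⁻¹(h₂)` of `H` on `H^op`. -/
noncomputable def adCoact (αH : H ≃ₗ[k] H) (mul : H →ₗ[k] H →ₗ[k] H)
    (comul : H →ₗ[k] H ⊗[k] H) (S : H →ₗ[k] H) : H →ₗ[k] H ⊗[k] H :=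
  (TensorProduct.map αH.toLinearMap
      ((TensorProduct.lift (mul ∘ₗ S)) ∘ₗ (LinearMap.lTensor H αH.symm.toLinearMap)))
  ∘ₗ (TensorProduct.assoc k H H H).toLinearMap
  ∘ₗ (LinearMap.rTensor H (TensorProduct.comm k H H).toLinearMap)
  ∘ₗ (LinearMap.rTensor H comul)
  ∘ₗ comul

end Adjoint
section AuxHH

open TensorProduct LinearMap

variable {k : Type*} [Field k] {H : Type*} [AddCommGroup H] [Module k H]

namespace HHaux

variable (Hh : HomHopf k H)

/-- curried→uncurried multiplication -/
noncomputable def m2 : H ⊗[k] H →ₗ[k] H := TensorProduct.lift Hh.mul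

/-- multiplication on `H ⊗ H` -/
noncomputable def M2 : (H ⊗[k] H) ⊗[k] (H ⊗[k] H) →ₗ[k] H ⊗[k] H :=
  TensorProduct.map (m2 Hh) (m2 Hh) ∘ₗ (TensorProduct.tensorTensorTensorComm k H H H H).toLinearMap

noncomputable def A : H →ₗ[k] H := Hh.au.toLinearMap
noncomputable def A' : H →ₗ[k] H := Hh.au.symm.toLinearMap

/-- `S(x₂) ⊗ S(x₁)` -/
noncomputable def tSS : H →ₗ[k] H ⊗[k] H :=
  (TensorProduct.comm k H H).toLinearMap ∘ₗ TensorProduct.map Hh.S Hh.S ∘ₗ Hh.comul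

noncomputable def cL : H →ₗ[k] H ⊗[k] (H ⊗[k] H) := lTensor H Hh.comul ∘ₗ Hh.comul
noncomputable def cR : H →ₗ[k] (H ⊗[k] H) ⊗[k] H := rTensor H Hh.comul ∘ₗ Hh.comul

/-- unit of the convolution algebra `Hom(H, H⊗H)` -/
noncomputable def e2 : H →ₗ[k] H ⊗[k] H :=
  (LinearMap.toSpanSingleton k (H ⊗[k] H) (Hh.one ⊗ₜ[k] Hh.one)) ∘ₗ Hh.counit

/-- convolution on `Hom(H, H⊗H)` -/
noncomputable def conv (f g : H →ₗ[k] H ⊗[k] H) : H →ₗ[k] H ⊗[k] H :=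
  M2 Hh ∘ₗ TensorProduct.map f g ∘ₗ Hh.comul

@[simp] lemma m2_tmul (x y : H) : m2 Hh (x ⊗ₜ[k] y) = Hh.mul x y := rfl

@[simp] lemma M2_tmul (x y z w : H) :
    M2 Hh ((x ⊗ₜ[k] y) ⊗ₜ[k] (z ⊗ₜ[k] w)) = Hh.mul x z ⊗ₜ[k] Hh.mul y w := rfl

@[simp] lemma A_apply (x : H) : A Hh x = Hh.au x := rfl
@[simp] lemma A'_apply (x : H) : A' Hh x = Hh.au.symm x := rfl

lemma au_symm_mul (x y : H) :
    Hh.au.symm (Hh.mul x y) = Hh.mul (Hh.au.symm x) (Hh.au.symm y) := by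
  apply Hh.au.injective
  rw [Hh.au_mul]
  simp

lemma S_au_apply (x : H) : Hh.S (Hh.au x) = Hh.au (Hh.S x) :=
  LinearMap.congr_fun Hh.S_au x

lemma S_au_symm_apply (x : H) : Hh.S (Hh.au.symm x) = Hh.au.symm (Hh.S x) := by
  apply Hh.au.injective
  rw [← S_au_apply]
  simp

@[simp] lemma au_symm_one : Hh.au.symm Hh.one = Hh.one := by
  apply Hh.au.injective; rw [Hh.au_one]; simp [Hh.au_one]

lemma comul_au_symm (c : H) :
    Hh.comul (Hh.au.symm c) = TensorProduct.map (A' Hh) (A' Hh) (Hh.comul c) := by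
  have := Hh.comul_au (Hh.au.symm c)
  simp only [LinearEquiv.apply_symm_apply] at this
  rw [this]
  have : ∀ t : H ⊗[k] H, TensorProduct.map (A' Hh) (A' Hh)
      (TensorProduct.map Hh.au.toLinearMap Hh.au.toLinearMap t) = t := by
    intro t
    induction t using TensorProduct.induction_on with
    | zero => simp
    | tmul => simp [A']
    | add a b ha hb => simp [ha, hb]
  exact (this _).symm ▸ rfl

end HHaux
end AuxHH
set_option maxRecDepth 4000
section AuxHH2
open TensorProduct LinearMap
variable {k : Type*} [Field k] {H : Type*} [AddCommGroup H] [Module k H]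
namespace HHaux
variable (Hh : HomHopf k H)

lemma comul_mul_comp :
    Hh.comul ∘ₗ m2 Hh = M2 Hh ∘ₗ TensorProduct.map Hh.comul Hh.comul := by
  apply TensorProduct.ext'
  intro x y
  simpa [M2, m2] using Hh.comul_mul x y

lemma EqC1 : cL Hh
    = TensorProduct.map (A Hh) LinearMap.id
      ∘ₗ (TensorProduct.assoc k H H H).toLinearMap
      ∘ₗ TensorProduct.map LinearMap.id (A' Hh)
      ∘ₗ cR Hh := by
  have h1 : TensorProduct.map (A' Hh) Hh.comul ∘ₗ Hh.comul
      = TensorProduct.map (A' Hh) LinearMap.id ∘ₗ cL Hh := by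
    rw [cL]
    ext x
    simp only [coe_comp, Function.comp_apply]
    set t := Hh.comul x
    induction t using TensorProduct.induction_on with
    | zero => simp
    | tmul => simp
    | add a b ha hb => simp only [map_add, ha, hb]
  have h2 : TensorProduct.map Hh.comul (A' Hh) ∘ₗ Hh.comul
      = TensorProduct.map LinearMap.id (A' Hh) ∘ₗ cR Hh := by
    rw [cR]
    ext x
    simp only [coe_comp, Function.comp_apply]
    set t := Hh.comul x
    induction t using TensorProduct.induction_on with
    | zero => simp
    | tmul => simp
    | add a b ha hb => simp only [map_add, ha, hb]
  have hco := Hh.hom_coassoc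
  rw [show Hh.au.symm.toLinearMap = A' Hh from rfl] at hco
  rw [h1, h2] at hco
  have cancel : TensorProduct.map (A Hh) (LinearMap.id (R := k) (M := H ⊗[k] H))
      ∘ₗ TensorProduct.map (A' Hh) LinearMap.id = LinearMap.id := by
    apply TensorProduct.ext'
    intro x y
    simp
  calc cL Hh = (TensorProduct.map (A Hh) LinearMap.id
        ∘ₗ TensorProduct.map (A' Hh) LinearMap.id) ∘ₗ cL Hh := by rw [cancel]; simp
    _ = TensorProduct.map (A Hh) LinearMap.id ∘ₗ (TensorProduct.map (A' Hh) LinearMap.id ∘ₗ cL Hh) := by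
        rw [LinearMap.comp_assoc]
    _ = TensorProduct.map (A Hh) LinearMap.id ∘ₗ ((TensorProduct.assoc k H H H).toLinearMap
          ∘ₗ TensorProduct.map LinearMap.id (A' Hh) ∘ₗ cR Hh) := by rw [hco]
    _ = _ := by simp only [LinearMap.comp_assoc]

lemma EqC2 : cR Hh
    = TensorProduct.map LinearMap.id (A Hh)
      ∘ₗ (TensorProduct.assoc k H H H).symm.toLinearMap
      ∘ₗ TensorProduct.map (A' Hh) LinearMap.id
      ∘ₗ cL Hh := by
  rw [EqC1]
  apply LinearMap.ext
  intro x
  simp only [coe_comp, Function.comp_apply]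
  set t := cR Hh x
  clear_value t
  induction t using TensorProduct.induction_on with
  | zero => simp only [map_zero]
  | tmul u z =>
      induction u using TensorProduct.induction_on with
      | zero => simp only [map_zero, zero_tmul]
      | tmul a b =>
          simp only [map_tmul, assoc_tmul, assoc_symm_tmul, LinearEquiv.coe_coe,
            id_coe, id_eq, A_apply, A'_apply, LinearEquiv.apply_symm_apply,
            LinearEquiv.symm_apply_apply]
      | add a b ha hb => simp only [add_tmul, map_add]; rw [← ha, ← hb]
  | add a b ha hb => simp only [map_add]; rw [← ha, ← hb]

lemma EqS1 : m2 Hh ∘ₗ TensorProduct.map Hh.S LinearMap.id ∘ₗ Hh.comul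
    = LinearMap.toSpanSingleton k H Hh.one ∘ₗ Hh.counit := by
  apply LinearMap.ext; intro x
  simpa [m2] using Hh.S_mul_id x

lemma EqS2 : m2 Hh ∘ₗ TensorProduct.map LinearMap.id Hh.S ∘ₗ Hh.comul
    = LinearMap.toSpanSingleton k H Hh.one ∘ₗ Hh.counit := by
  apply LinearMap.ext; intro x
  simpa [m2] using Hh.id_mul_S x

lemma EqE1 : TensorProduct.map LinearMap.id Hh.counit ∘ₗ Hh.comul
    = (TensorProduct.rid k H).symm.toLinearMap ∘ₗ A' Hh := by
  apply LinearMap.ext; intro x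
  have := Hh.comul_counit x
  simp only [coe_comp, Function.comp_apply, LinearEquiv.coe_coe, A'_apply]
  rw [← this]
  simp

lemma EqE2 : TensorProduct.map Hh.counit LinearMap.id ∘ₗ Hh.comul
    = (TensorProduct.lid k H).symm.toLinearMap ∘ₗ A' Hh := by
  apply LinearMap.ext; intro x
  have := Hh.counit_comul x
  simp only [coe_comp, Function.comp_apply, LinearEquiv.coe_coe, A'_apply]
  rw [← this]
  simp

lemma comul_au_comp : Hh.comul ∘ₗ A Hh = TensorProduct.map (A Hh) (A Hh) ∘ₗ Hh.comul := by
  apply LinearMap.ext; intro x; simpa [A] using Hh.comul_au x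

end HHaux
end AuxHH2
section AuxHH3
open TensorProduct LinearMap
variable {k : Type*} [Field k] {H : Type*} [AddCommGroup H] [Module k H]
namespace HHaux
variable (Hh : HomHopf k H)

lemma M2_assoc (t u v : H ⊗[k] H) :
    M2 Hh (TensorProduct.map (A Hh) (A Hh) t ⊗ₜ[k] M2 Hh (u ⊗ₜ[k] v))
      = M2 Hh (M2 Hh (t ⊗ₜ[k] u) ⊗ₜ[k] TensorProduct.map (A Hh) (A Hh) v) := by
  induction t using TensorProduct.induction_on with
  | zero => simp
  | add a b ha hb => simp only [map_add, add_tmul, ha, hb]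
  | tmul x y =>
    induction u using TensorProduct.induction_on with
    | zero => simp
    | add a b ha hb => simp only [map_add, add_tmul, tmul_add, ha, hb]
    | tmul z w =>
      induction v using TensorProduct.induction_on with
      | zero => simp
      | add a b ha hb => simp only [map_add, tmul_add, ha, hb]
      | tmul p q =>
        simp only [map_tmul, M2_tmul, A_apply]
        rw [Hh.hom_assoc, Hh.hom_assoc]

lemma M2_one_r (t : H ⊗[k] H) :
    M2 Hh (t ⊗ₜ[k] (Hh.one ⊗ₜ[k] Hh.one)) = TensorProduct.map (A Hh) (A Hh) t := by
  induction t using TensorProduct.induction_on with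
  | zero => simp
  | add a b ha hb => simp only [add_tmul, map_add, ha, hb]
  | tmul x y => simp [Hh.mul_one']

lemma M2_one_l (t : H ⊗[k] H) :
    M2 Hh ((Hh.one ⊗ₜ[k] Hh.one) ⊗ₜ[k] t) = TensorProduct.map (A Hh) (A Hh) t := by
  induction t using TensorProduct.induction_on with
  | zero => simp
  | add a b ha hb => simp only [tmul_add, map_add, ha, hb]
  | tmul x y => simp [Hh.one_mul']

lemma conv_unit_r (f : H →ₗ[k] H ⊗[k] H)
    (hf : f ∘ₗ A Hh = TensorProduct.map (A Hh) (A Hh) ∘ₗ f) :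
    conv Hh f (e2 Hh) = f := by
  have hsplit : TensorProduct.map f (e2 Hh)
      = TensorProduct.map f (LinearMap.toSpanSingleton k (H ⊗[k] H) (Hh.one ⊗ₜ[k] Hh.one))
        ∘ₗ TensorProduct.map LinearMap.id Hh.counit := by
    rw [e2, ← TensorProduct.map_comp, LinearMap.comp_id]
  have hfx : ∀ y : H, TensorProduct.map (A Hh) (A Hh) (f y) = f (Hh.au y) :=
    fun y => (LinearMap.congr_fun hf y).symm
  apply LinearMap.ext; intro x
  have e1 : TensorProduct.map (LinearMap.id (R := k) (M := H)) Hh.counit (Hh.comul x)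
      = (TensorProduct.rid k H).symm (Hh.au.symm x) := by
    simpa using LinearMap.congr_fun (EqE1 Hh) x
  simp only [conv, coe_comp, Function.comp_apply, hsplit, e1]
  simp only [rid_symm_apply, map_tmul, toSpanSingleton_apply, one_smul, id_coe, id_eq]
  rw [M2_one_r, hfx]
  simp

lemma conv_unit_l (g : H →ₗ[k] H ⊗[k] H)
    (hg : g ∘ₗ A Hh = TensorProduct.map (A Hh) (A Hh) ∘ₗ g) :
    conv Hh (e2 Hh) g = g := by
  have hsplit : TensorProduct.map (e2 Hh) g
      = TensorProduct.map (LinearMap.toSpanSingleton k (H ⊗[k] H) (Hh.one ⊗ₜ[k] Hh.one)) g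
        ∘ₗ TensorProduct.map Hh.counit LinearMap.id := by
    rw [e2, ← TensorProduct.map_comp, LinearMap.comp_id]
  have hgx : ∀ y : H, TensorProduct.map (A Hh) (A Hh) (g y) = g (Hh.au y) :=
    fun y => (LinearMap.congr_fun hg y).symm
  apply LinearMap.ext; intro x
  have e1 : TensorProduct.map Hh.counit (LinearMap.id (R := k) (M := H)) (Hh.comul x)
      = (TensorProduct.lid k H).symm (Hh.au.symm x) := by
    simpa using LinearMap.congr_fun (EqE2 Hh) x
  simp only [conv, coe_comp, Function.comp_apply, hsplit, e1]
  simp only [lid_symm_apply, map_tmul, toSpanSingleton_apply, one_smul, id_coe, id_eq]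
  rw [M2_one_l, hgx]
  simp

lemma conv_assoc (f g l : H →ₗ[k] H ⊗[k] H)
    (hf : f ∘ₗ A Hh = TensorProduct.map (A Hh) (A Hh) ∘ₗ f)
    (hl : l ∘ₗ A Hh = TensorProduct.map (A Hh) (A Hh) ∘ₗ l) :
    conv Hh (conv Hh f g) l = conv Hh f (conv Hh g l) := by
  have hfx : ∀ y : H, TensorProduct.map (A Hh) (A Hh) (f y) = f (Hh.au y) :=
    fun y => (LinearMap.congr_fun hf y).symm
  have hlx : ∀ y : H, l (Hh.au y) = TensorProduct.map (A Hh) (A Hh) (l y) :=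
    fun y => LinearMap.congr_fun hl y
  have lhs1 : conv Hh (conv Hh f g) l
      = (M2 Hh ∘ₗ TensorProduct.map (M2 Hh ∘ₗ TensorProduct.map f g) l) ∘ₗ cR Hh := by
    have h : TensorProduct.map (M2 Hh ∘ₗ TensorProduct.map f g ∘ₗ Hh.comul) l
        = TensorProduct.map (M2 Hh ∘ₗ TensorProduct.map f g) l ∘ₗ rTensor H Hh.comul := by
      apply TensorProduct.ext'; intro a b; simp
    rw [conv, conv, cR, h]
    simp only [LinearMap.comp_assoc]
  have rhs1 : conv Hh f (conv Hh g l)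
      = (M2 Hh ∘ₗ TensorProduct.map f (M2 Hh ∘ₗ TensorProduct.map g l)) ∘ₗ cL Hh := by
    have h : TensorProduct.map f (M2 Hh ∘ₗ TensorProduct.map g l ∘ₗ Hh.comul)
        = TensorProduct.map f (M2 Hh ∘ₗ TensorProduct.map g l) ∘ₗ lTensor H Hh.comul := by
      apply TensorProduct.ext'; intro a b; simp
    rw [conv, conv, cL, h]
    simp only [LinearMap.comp_assoc]
  rw [lhs1, rhs1, EqC2 Hh]
  simp only [← LinearMap.comp_assoc]
  congr 1
  -- now an equality of maps on H ⊗ (H ⊗ H), Δ-free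
  apply TensorProduct.ext'
  intro x w
  induction w using TensorProduct.induction_on with
  | zero => simp
  | add a b ha hb => simp only [tmul_add, map_add, ha, hb]
  | tmul y z =>
    simp only [coe_comp, Function.comp_apply, map_tmul, assoc_symm_tmul,
      LinearEquiv.coe_coe, id_coe, id_eq, A_apply, A'_apply]
    rw [hlx z, ← M2_assoc, hfx]
    simp
end HHaux
end AuxHH3
section AuxHH4
open TensorProduct LinearMap
variable {k : Type*} [Field k] {H : Type*} [AddCommGroup H] [Module k H]
namespace HHaux
variable (Hh : HomHopf k H)

lemma acomm_comul : Hh.comul ∘ₗ A Hh = TensorProduct.map (A Hh) (A Hh) ∘ₗ Hh.comul :=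
  comul_au_comp Hh

lemma acomm_DS : (Hh.comul ∘ₗ Hh.S) ∘ₗ A Hh
    = TensorProduct.map (A Hh) (A Hh) ∘ₗ (Hh.comul ∘ₗ Hh.S) := by
  apply LinearMap.ext; intro x
  simp only [coe_comp, Function.comp_apply, A_apply]
  rw [S_au_apply, Hh.comul_au]
  rfl

lemma acomm_tSS : tSS Hh ∘ₗ A Hh = TensorProduct.map (A Hh) (A Hh) ∘ₗ tSS Hh := by
  apply LinearMap.ext; intro x
  simp only [tSS, coe_comp, Function.comp_apply, A_apply, LinearEquiv.coe_coe]
  rw [Hh.comul_au]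
  set t := Hh.comul x
  clear_value t
  induction t using TensorProduct.induction_on with
  | zero => simp
  | tmul a b => simp [S_au_apply]
  | add a b ha hb => simp only [map_add, ha, hb]

lemma acomm_e2 : e2 Hh ∘ₗ A Hh = TensorProduct.map (A Hh) (A Hh) ∘ₗ e2 Hh := by
  apply LinearMap.ext; intro x
  simp only [e2, coe_comp, Function.comp_apply, A_apply, toSpanSingleton_apply,
    Hh.counit_au]
  simp [Hh.au_one]

lemma conv_D_DS : conv Hh Hh.comul (Hh.comul ∘ₗ Hh.S) = e2 Hh := by
  apply LinearMap.ext; intro x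
  have h1 : ∀ t : H ⊗[k] H, TensorProduct.map Hh.comul (Hh.comul ∘ₗ Hh.S) t
      = TensorProduct.map Hh.comul Hh.comul (TensorProduct.map LinearMap.id Hh.S t) := by
    intro t
    induction t using TensorProduct.induction_on with
    | zero => simp
    | tmul a b => simp
    | add a b ha hb => simp only [map_add, ha, hb]
  have h2 : ∀ t : H ⊗[k] H, M2 Hh (TensorProduct.map Hh.comul Hh.comul t)
      = Hh.comul (m2 Hh t) := by
    intro t
    exact (LinearMap.congr_fun (comul_mul_comp Hh) t).symm
  simp only [conv, coe_comp, Function.comp_apply]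
  rw [h1, h2]
  have h3 : m2 Hh (TensorProduct.map LinearMap.id Hh.S (Hh.comul x))
      = Hh.counit x • Hh.one := by
    simpa [m2] using Hh.id_mul_S x
  rw [h3]
  simp [e2, Hh.comul_one]

end HHaux
end AuxHH4
section AuxHH5
open TensorProduct LinearMap
variable {k : Type*} [Field k] {H : Type*} [AddCommGroup H] [Module k H]
namespace HHaux
variable (Hh : HomHopf k H)

noncomputable def sg2 : H ⊗[k] (H ⊗[k] H) →ₗ[k] H ⊗[k] (H ⊗[k] H) :=
  (TensorProduct.assoc k H H H).toLinearMap
  ∘ₗ rTensor H (TensorProduct.comm k H H).toLinearMap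
  ∘ₗ (TensorProduct.assoc k H H H).symm.toLinearMap

@[simp] lemma sg2_tmul (y p r : H) :
    sg2 (k := k) (y ⊗ₜ[k] (p ⊗ₜ[k] r)) = p ⊗ₜ[k] (y ⊗ₜ[k] r) := by
  simp [sg2]

noncomputable def sg4 : H ⊗[k] (k ⊗[k] H) →ₗ[k] k ⊗[k] (H ⊗[k] H) :=
  (TensorProduct.assoc k k H H).toLinearMap
  ∘ₗ rTensor H (TensorProduct.comm k H k).toLinearMap
  ∘ₗ (TensorProduct.assoc k H k H).symm.toLinearMap

@[simp] lemma sg4_tmul (y : H) (c : k) (r : H) :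
    sg4 (k := k) (y ⊗ₜ[k] (c ⊗ₜ[k] r)) = c ⊗ₜ[k] (y ⊗ₜ[k] r) := by
  simp [sg4]

/-- head of the intermediate form -/
noncomputable def Th : H ⊗[k] (H ⊗[k] H) →ₗ[k] H ⊗[k] H :=
  TensorProduct.map (LinearMap.toSpanSingleton k H Hh.one ∘ₗ Hh.counit)
    (m2 Hh ∘ₗ TensorProduct.map (Hh.S ∘ₗ A' Hh) LinearMap.id)

noncomputable def Psi : H →ₗ[k] H ⊗[k] (H ⊗[k] H) :=
  TensorProduct.map (Hh.S ∘ₗ A Hh) (TensorProduct.map (A Hh) (A Hh))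
  ∘ₗ (TensorProduct.assoc k H H H).toLinearMap
  ∘ₗ TensorProduct.map LinearMap.id (A' Hh)
  ∘ₗ rTensor H Hh.comul ∘ₗ Hh.comul

lemma EqS1' (p : H) :
    m2 Hh (TensorProduct.map Hh.S LinearMap.id (Hh.comul p)) = Hh.counit p • Hh.one := by
  simpa [m2] using Hh.S_mul_id p

lemma EqC1' (x : H) :
    lTensor H Hh.comul (Hh.comul x)
      = TensorProduct.map (A Hh) LinearMap.id
          ((TensorProduct.assoc k H H H)
            (TensorProduct.map LinearMap.id (A' Hh) (rTensor H Hh.comul (Hh.comul x)))) := by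
  have := LinearMap.congr_fun (EqC1 Hh) x
  simpa [cL, cR] using this

lemma EqC2' (x : H) :
    rTensor H Hh.comul (Hh.comul x)
      = TensorProduct.map LinearMap.id (A Hh)
          ((TensorProduct.assoc k H H H).symm
            (TensorProduct.map (A' Hh) LinearMap.id (lTensor H Hh.comul (Hh.comul x)))) := by
  have := LinearMap.congr_fun (EqC2 Hh) x
  simpa [cL, cR] using this

lemma EqE2' (z : H) :
    TensorProduct.map Hh.counit LinearMap.id (Hh.comul z)
      = (TensorProduct.lid k H).symm (Hh.au.symm z) := by
  simpa using LinearMap.congr_fun (EqE2 Hh) z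

lemma conv_TSS_D : conv Hh (tSS Hh) Hh.comul = e2 Hh := by
  apply LinearMap.ext; intro x
  simp only [conv, coe_comp, Function.comp_apply]
  -- step 1: split tSS
  have h1 : ∀ t : H ⊗[k] H, TensorProduct.map (tSS Hh) Hh.comul t
      = TensorProduct.map (TensorProduct.comm k H H).toLinearMap LinearMap.id
          (TensorProduct.map (TensorProduct.map Hh.S Hh.S) LinearMap.id
            (TensorProduct.map Hh.comul Hh.comul t)) := by
    intro t
    induction t using TensorProduct.induction_on with
    | zero => simp
    | tmul a b => simp [tSS]
    | add a b ha hb => simp only [map_add, ha, hb]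
  have h2 : ∀ t : H ⊗[k] H, TensorProduct.map Hh.comul Hh.comul t
      = TensorProduct.map LinearMap.id Hh.comul (rTensor H Hh.comul t) := by
    intro t
    induction t using TensorProduct.induction_on with
    | zero => simp
    | tmul a b => simp
    | add a b ha hb => simp only [map_add, ha, hb]
  rw [h1, h2, EqC2' Hh x]
  -- step 2: reorganize (Δ-opaque plumbing)
  have h3 : ∀ w : H ⊗[k] (H ⊗[k] H),
      TensorProduct.map (TensorProduct.comm k H H).toLinearMap LinearMap.id
        (TensorProduct.map (TensorProduct.map Hh.S Hh.S) LinearMap.id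
          (TensorProduct.map LinearMap.id Hh.comul
            (TensorProduct.map LinearMap.id (A Hh)
              ((TensorProduct.assoc k H H H).symm
                (TensorProduct.map (A' Hh) LinearMap.id w)))))
      = TensorProduct.map (TensorProduct.comm k H H).toLinearMap LinearMap.id
          ((TensorProduct.assoc k H H (H ⊗[k] H)).symm
            (TensorProduct.map (Hh.S ∘ₗ A' Hh)
              (TensorProduct.map Hh.S (Hh.comul ∘ₗ A Hh)) w)) := by
    intro w
    induction w using TensorProduct.induction_on with
    | zero => simp
    | add a b ha hb => simp only [map_add, ha, hb]
    | tmul y v =>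
      induction v using TensorProduct.induction_on with
      | zero => simp
      | add a b ha hb => simp only [map_add, tmul_add, ha, hb]
      | tmul p r => simp
  rw [h3]
  -- step 3: coassociativity inside the second slot
  have h5z : ∀ z : H, TensorProduct.map Hh.S (Hh.comul ∘ₗ A Hh) (Hh.comul z) = Psi Hh z := by
    intro z
    have ha : ∀ t : H ⊗[k] H, TensorProduct.map Hh.S (Hh.comul ∘ₗ A Hh) t
        = TensorProduct.map Hh.S (TensorProduct.map (A Hh) (A Hh)) (lTensor H Hh.comul t) := by
      intro t
      induction t using TensorProduct.induction_on with
      | zero => simp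
      | tmul a b => simp [Hh.comul_au]; rfl
      | add a b ha hb => simp only [map_add, ha, hb]
    rw [ha, EqC1' Hh z]
    have hb : ∀ w : (H ⊗[k] H) ⊗[k] H,
        TensorProduct.map Hh.S (TensorProduct.map (A Hh) (A Hh))
          (TensorProduct.map (A Hh) LinearMap.id ((TensorProduct.assoc k H H H) w))
        = TensorProduct.map (Hh.S ∘ₗ A Hh) (TensorProduct.map (A Hh) (A Hh))
            ((TensorProduct.assoc k H H H) w) := by
      intro w
      induction w using TensorProduct.induction_on with
      | zero => simp
      | add a b ha hb => simp only [map_add, ha, hb]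
      | tmul u r =>
        induction u using TensorProduct.induction_on with
        | zero => simp
        | add a b ha hb => simp only [map_add, add_tmul, ha, hb]
        | tmul a c => simp
    rw [hb]
    simp only [Psi, coe_comp, Function.comp_apply, LinearEquiv.coe_coe]
  have h5 : ∀ t : H ⊗[k] H,
      TensorProduct.map (Hh.S ∘ₗ A' Hh) (TensorProduct.map Hh.S (Hh.comul ∘ₗ A Hh))
        (lTensor H Hh.comul t)
      = TensorProduct.map (Hh.S ∘ₗ A' Hh) (Psi Hh) t := by
    intro t
    induction t using TensorProduct.induction_on with
    | zero => simp
    | add a b ha hb => simp only [map_add, ha, hb]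
    | tmul y z => simp only [lTensor_tmul, map_tmul, h5z, id_coe, id_eq]
  have h5' : TensorProduct.map (Hh.S ∘ₗ A' Hh)
        (TensorProduct.map Hh.S (Hh.comul ∘ₗ A Hh)) (lTensor H Hh.comul (Hh.comul x))
      = TensorProduct.map (Hh.S ∘ₗ A' Hh) (Psi Hh) (Hh.comul x) := h5 _
  rw [h5']
  -- step 4: the antipode collapse
  have hkey : ∀ (y r : H) (u : H ⊗[k] H),
      M2 Hh (TensorProduct.map (TensorProduct.comm k H H).toLinearMap LinearMap.id
        ((TensorProduct.assoc k H H (H ⊗[k] H)).symm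
          (Hh.S (Hh.au.symm y) ⊗ₜ[k]
            (TensorProduct.map (Hh.S ∘ₗ A Hh) (TensorProduct.map (A Hh) (A Hh))
              ((TensorProduct.assoc k H H H) (u ⊗ₜ[k] Hh.au.symm r))))))
      = Hh.au (m2 Hh (TensorProduct.map Hh.S LinearMap.id u)) ⊗ₜ[k]
          m2 Hh (Hh.S (Hh.au.symm y) ⊗ₜ[k] r) := by
    intro y r u
    induction u using TensorProduct.induction_on with
    | zero => simp
    | add a b ha hb => simp only [map_add, add_tmul, ha, hb, tmul_add, add_tmul]
    | tmul a c =>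
      simp only [assoc_tmul, map_tmul, coe_comp, Function.comp_apply, A_apply, A'_apply,
        id_coe, id_eq, LinearEquiv.coe_coe, assoc_symm_tmul, comm_tmul, M2_tmul, m2_tmul,
        LinearEquiv.apply_symm_apply]
      rw [S_au_apply, ← Hh.au_mul]
  have h6 : ∀ t : H ⊗[k] H,
      M2 Hh (TensorProduct.map (TensorProduct.comm k H H).toLinearMap LinearMap.id
        ((TensorProduct.assoc k H H (H ⊗[k] H)).symm
          (TensorProduct.map (Hh.S ∘ₗ A' Hh) (Psi Hh) t)))
      = Th Hh (sg2 (lTensor H Hh.comul t)) := by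
    intro t
    induction t using TensorProduct.induction_on with
    | zero => simp
    | add a b ha hb => simp only [map_add, ha, hb]
    | tmul y z =>
      simp only [map_tmul, coe_comp, Function.comp_apply, A'_apply, lTensor_tmul]
      simp only [Psi, coe_comp, Function.comp_apply, LinearEquiv.coe_coe]
      generalize Hh.comul z = s
      induction s using TensorProduct.induction_on with
      | zero => simp [Th]
      | add a b ha hb =>
          simp only [map_add, tmul_add, ha, hb]
      | tmul p r =>
        simp only [rTensor_tmul, map_tmul, id_coe, id_eq, A'_apply]
        rw [hkey y r (Hh.comul p), EqS1' Hh p]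
        simp only [map_smul, Hh.au_one, sg2_tmul, Th, map_tmul, coe_comp,
          Function.comp_apply, toSpanSingleton_apply, m2_tmul, A'_apply, id_coe, id_eq,
          smul_tmul', smul_tmul]
  rw [h6]
  -- step 5: move the counit out
  have h8 : ∀ w : H ⊗[k] (H ⊗[k] H),
      Th Hh (sg2 w)
      = TensorProduct.map (LinearMap.toSpanSingleton k H Hh.one)
          (m2 Hh ∘ₗ TensorProduct.map (Hh.S ∘ₗ A' Hh) LinearMap.id)
          (sg4 (lTensor H (TensorProduct.map Hh.counit LinearMap.id) w)) := by
    intro w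
    induction w using TensorProduct.induction_on with
    | zero => simp
    | add a b ha hb => simp only [map_add, ha, hb]
    | tmul y v =>
      induction v using TensorProduct.induction_on with
      | zero => simp
      | add a b ha hb => simp only [map_add, tmul_add, ha, hb]
      | tmul p r =>
        simp only [sg2_tmul, Th, map_tmul, lTensor_tmul, sg4_tmul, coe_comp,
          Function.comp_apply, toSpanSingleton_apply, id_coe, id_eq]
  rw [h8]
  have h9 : ∀ t : H ⊗[k] H,
      lTensor H (TensorProduct.map Hh.counit LinearMap.id) (lTensor H Hh.comul t)
      = lTensor H ((TensorProduct.lid k H).symm.toLinearMap ∘ₗ A' Hh) t := by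
    intro t
    induction t using TensorProduct.induction_on with
    | zero => simp
    | add a b ha hb => simp only [map_add, ha, hb]
    | tmul y z => simp [EqE2' Hh z]
  rw [h9]
  have h10 : ∀ t : H ⊗[k] H,
      TensorProduct.map (LinearMap.toSpanSingleton k H Hh.one)
          (m2 Hh ∘ₗ TensorProduct.map (Hh.S ∘ₗ A' Hh) LinearMap.id)
          (sg4 (lTensor H ((TensorProduct.lid k H).symm.toLinearMap ∘ₗ A' Hh) t))
      = TensorProduct.mk k H H Hh.one (Hh.au.symm (m2 Hh (TensorProduct.map Hh.S LinearMap.id t))) := by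
    intro t
    induction t using TensorProduct.induction_on with
    | zero => simp
    | add a b ha hb => simp only [map_add, ha, hb, tmul_add]
    | tmul y w =>
      simp only [lTensor_tmul, coe_comp, Function.comp_apply, A'_apply,
        LinearEquiv.coe_coe, lid_symm_apply, sg4_tmul, map_tmul,
        toSpanSingleton_apply, one_smul, m2_tmul, id_coe, id_eq, mk_apply]
      rw [S_au_symm_apply, ← au_symm_mul]
  rw [h10, EqS1' Hh x]
  simp [e2, tmul_smul]

lemma S_anticomul : Hh.comul ∘ₗ Hh.S = tSS Hh := by
  have h1 := conv_unit_l Hh (Hh.comul ∘ₗ Hh.S) (acomm_DS Hh)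
  have h2 := conv_assoc Hh (tSS Hh) Hh.comul (Hh.comul ∘ₗ Hh.S) (acomm_tSS Hh) (acomm_DS Hh)
  have h3 := conv_unit_r Hh (tSS Hh) (acomm_tSS Hh)
  calc Hh.comul ∘ₗ Hh.S = conv Hh (e2 Hh) (Hh.comul ∘ₗ Hh.S) := h1.symm
    _ = conv Hh (conv Hh (tSS Hh) Hh.comul) (Hh.comul ∘ₗ Hh.S) := by rw [conv_TSS_D]
    _ = conv Hh (tSS Hh) (conv Hh Hh.comul (Hh.comul ∘ₗ Hh.S)) := h2
    _ = conv Hh (tSS Hh) (e2 Hh) := by rw [conv_D_DS]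
    _ = tSS Hh := h3

end HHaux
end AuxHH5
section AuxHH6
open TensorProduct LinearMap
variable {k : Type*} [Field k] {M N P : Type*} [AddCommGroup M] [Module k M]
  [AddCommGroup N] [Module k N] [AddCommGroup P] [Module k P]

/-- `(m⊗n)⊗p ↦ (m⊗p)⊗n` -/
noncomputable def rho : (M ⊗[k] N) ⊗[k] P →ₗ[k] (M ⊗[k] P) ⊗[k] N :=
  (TensorProduct.assoc k M P N).symm.toLinearMap
  ∘ₗ lTensor M (TensorProduct.comm k N P).toLinearMap
  ∘ₗ (TensorProduct.assoc k M N P).toLinearMap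

@[simp] lemma rho_tmul (m : M) (n : N) (p : P) :
    rho (k := k) ((m ⊗ₜ[k] n) ⊗ₜ[k] p) = (m ⊗ₜ[k] p) ⊗ₜ[k] n := by simp [rho]

/-- `m⊗(n⊗p) ↦ n⊗(m⊗p)` -/
noncomputable def swp : M ⊗[k] (N ⊗[k] P) →ₗ[k] N ⊗[k] (M ⊗[k] P) :=
  (TensorProduct.assoc k N M P).toLinearMap
  ∘ₗ rTensor P (TensorProduct.comm k M N).toLinearMap
  ∘ₗ (TensorProduct.assoc k M N P).symm.toLinearMap

@[simp] lemma swp_tmul (m : M) (n : N) (p : P) :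
    swp (k := k) (m ⊗ₜ[k] (n ⊗ₜ[k] p)) = n ⊗ₜ[k] (m ⊗ₜ[k] p) := by simp [swp]

end AuxHH6

section AuxHH7
open TensorProduct LinearMap
variable {k : Type*} [Field k] {H : Type*} [AddCommGroup H] [Module k H]
namespace HHaux
variable (Hh : HomHopf k H)

noncomputable def uSA : H →ₗ[k] H := Hh.S ∘ₗ A Hh
noncomputable def uSAA : H →ₗ[k] H := Hh.S ∘ₗ A Hh ∘ₗ A Hh
noncomputable def uSA' : H →ₗ[k] H := Hh.S ∘ₗ A' Hh
noncomputable def uAAA : H →ₗ[k] H := A Hh ∘ₗ A Hh ∘ₗ A Hh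
noncomputable def uA'2 : H →ₗ[k] H := A' Hh ∘ₗ A' Hh

@[simp] lemma uSA_apply (x : H) : uSA Hh x = Hh.S (Hh.au x) := rfl
@[simp] lemma uSAA_apply (x : H) : uSAA Hh x = Hh.S (Hh.au (Hh.au x)) := rfl
@[simp] lemma uSA'_apply (x : H) : uSA' Hh x = Hh.S (Hh.au.symm x) := rfl
@[simp] lemma uAAA_apply (x : H) : uAAA Hh x = Hh.au (Hh.au (Hh.au x)) := rfl
@[simp] lemma uA'2_apply (x : H) : uA'2 Hh x = Hh.au.symm (Hh.au.symm x) := rfl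

/-- slot-1 multiplication `((q1⊗b1)⊗q2) ↦ (S(α²q1)·α⁻¹b1)·α³q2` -/
noncomputable def Mul1 : (H ⊗[k] H) ⊗[k] H →ₗ[k] H :=
  m2 Hh ∘ₗ rTensor H (m2 Hh) ∘ₗ TensorProduct.map (TensorProduct.map (uSAA Hh) (A' Hh)) (uAAA Hh)

@[simp] lemma Mul1_tmul (q1 b1 q2 : H) :
    Mul1 Hh ((q1 ⊗ₜ[k] b1) ⊗ₜ[k] q2)
      = Hh.mul (Hh.mul (Hh.S (Hh.au (Hh.au q1))) (Hh.au.symm b1)) (Hh.au (Hh.au (Hh.au q2))) := by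
  simp [Mul1]

/-- slot-2 multiplication, form 0:
`(c11⊗c2)⊗((d1⊗b2)⊗d2) ↦ (S(α c11)·c2)·((S(α⁻¹d1)·α⁻²b2)·d2)` -/
noncomputable def Mul2 : (H ⊗[k] H) ⊗[k] ((H ⊗[k] H) ⊗[k] H) →ₗ[k] H :=
  m2 Hh ∘ₗ TensorProduct.map
    (m2 Hh ∘ₗ TensorProduct.map (uSA Hh) LinearMap.id)
    (m2 Hh ∘ₗ rTensor H (m2 Hh) ∘ₗ TensorProduct.map (TensorProduct.map (uSA' Hh) (uA'2 Hh)) LinearMap.id)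

@[simp] lemma Mul2_tmul (c11 c2 d1 b2 d2 : H) :
    Mul2 Hh ((c11 ⊗ₜ[k] c2) ⊗ₜ[k] ((d1 ⊗ₜ[k] b2) ⊗ₜ[k] d2))
      = Hh.mul (Hh.mul (Hh.S (Hh.au c11)) c2)
          (Hh.mul (Hh.mul (Hh.S (Hh.au.symm d1)) (Hh.au.symm (Hh.au.symm b2))) d2) := by
  simp [Mul2]

/-- slot-2 multiplication, form 1:
`(c11⊗c2)⊗((d1⊗b2)⊗d2) ↦ (S(α c11)·(α⁻²(c2·S d1)·α⁻²b2))·(α d2)` -/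
noncomputable def Mul2' : (H ⊗[k] H) ⊗[k] ((H ⊗[k] H) ⊗[k] H) →ₗ[k] H :=
  m2 Hh ∘ₗ TensorProduct.map
    (m2 Hh ∘ₗ TensorProduct.map (uSA Hh)
      (m2 Hh ∘ₗ TensorProduct.map (uA'2 Hh ∘ₗ m2 Hh ∘ₗ TensorProduct.map LinearMap.id Hh.S) (uA'2 Hh)))
    (A Hh)
  ∘ₗ (rTensor H (lTensor H ((TensorProduct.assoc k H H H).symm.toLinearMap)
        ∘ₗ (TensorProduct.assoc k H H (H ⊗[k] H)).toLinearMap)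
      ∘ₗ (TensorProduct.assoc k (H ⊗[k] H) (H ⊗[k] H) H).symm.toLinearMap)

@[simp] lemma Mul2'_tmul (c11 c2 d1 b2 d2 : H) :
    Mul2' Hh ((c11 ⊗ₜ[k] c2) ⊗ₜ[k] ((d1 ⊗ₜ[k] b2) ⊗ₜ[k] d2))
      = Hh.mul (Hh.mul (Hh.S (Hh.au c11))
          (Hh.mul (Hh.au.symm (Hh.au.symm (Hh.mul c2 (Hh.S d1))))
            (Hh.au.symm (Hh.au.symm b2)))) (Hh.au d2) := by
  simp [Mul2']

end HHaux
end AuxHH7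
section AuxHH8
open TensorProduct LinearMap
variable {k : Type*} [Field k] {H : Type*} [AddCommGroup H] [Module k H]
namespace HHaux
variable (Hh : HomHopf k H)

/-- `((c11⊗(q1⊗q2))⊗c2)⊗b1 ↦ ((q1⊗b1)⊗q2)⊗(c11⊗c2)` -/
noncomputable def zeta : ((H ⊗[k] (H ⊗[k] H)) ⊗[k] H) ⊗[k] H
    →ₗ[k] ((H ⊗[k] H) ⊗[k] H) ⊗[k] (H ⊗[k] H) :=
  swp
  ∘ₗ lTensor H (rTensor H rho)
  ∘ₗ lTensor H rho
  ∘ₗ (TensorProduct.assoc k H ((H ⊗[k] H) ⊗[k] H) H).toLinearMap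
  ∘ₗ rTensor H (TensorProduct.assoc k H (H ⊗[k] H) H).toLinearMap

@[simp] lemma zeta_tmul (c11 q1 q2 c2 b1 : H) :
    zeta (k := k) (((c11 ⊗ₜ[k] (q1 ⊗ₜ[k] q2)) ⊗ₜ[k] c2) ⊗ₜ[k] b1)
      = ((q1 ⊗ₜ[k] b1) ⊗ₜ[k] q2) ⊗ₜ[k] (c11 ⊗ₜ[k] c2) := by
  simp [zeta]

/-- shared plumbing for `Phi0`/`Phi1`:
`(((c11⊗(q1⊗q2))⊗c2)⊗(d1⊗d2))⊗(b1⊗b2) ↦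
  ((q1⊗b1)⊗q2) ⊗ ((c11⊗c2)⊗((d1⊗b2)⊗d2))` -/
noncomputable def plumb0 : (((H ⊗[k] (H ⊗[k] H)) ⊗[k] H) ⊗[k] (H ⊗[k] H)) ⊗[k] (H ⊗[k] H)
    →ₗ[k] ((H ⊗[k] H) ⊗[k] H) ⊗[k] ((H ⊗[k] H) ⊗[k] ((H ⊗[k] H) ⊗[k] H)) :=
  lTensor ((H ⊗[k] H) ⊗[k] H) (lTensor (H ⊗[k] H) rho)
  ∘ₗ (TensorProduct.assoc k ((H ⊗[k] H) ⊗[k] H) (H ⊗[k] H) ((H ⊗[k] H) ⊗[k] H)).toLinearMap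
  ∘ₗ rTensor ((H ⊗[k] H) ⊗[k] H) zeta
  ∘ₗ (TensorProduct.tensorTensorTensorComm k ((H ⊗[k] (H ⊗[k] H)) ⊗[k] H) (H ⊗[k] H) H H).toLinearMap

@[simp] lemma plumb0_tmul (c11 q1 q2 c2 d1 d2 b1 b2 : H) :
    plumb0 (k := k) ((((c11 ⊗ₜ[k] (q1 ⊗ₜ[k] q2)) ⊗ₜ[k] c2) ⊗ₜ[k] (d1 ⊗ₜ[k] d2)) ⊗ₜ[k] (b1 ⊗ₜ[k] b2))
      = ((q1 ⊗ₜ[k] b1) ⊗ₜ[k] q2) ⊗ₜ[k] ((c11 ⊗ₜ[k] c2) ⊗ₜ[k] ((d1 ⊗ₜ[k] b2) ⊗ₜ[k] d2)) := by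
  simp [plumb0]

noncomputable def Phi0 : ((((H ⊗[k] (H ⊗[k] H)) ⊗[k] H) ⊗[k] (H ⊗[k] H)) ⊗[k] (H ⊗[k] H))
    →ₗ[k] H ⊗[k] H :=
  TensorProduct.map (Mul1 Hh) (Mul2 Hh) ∘ₗ plumb0

noncomputable def Phi1 : ((((H ⊗[k] (H ⊗[k] H)) ⊗[k] H) ⊗[k] (H ⊗[k] H)) ⊗[k] (H ⊗[k] H))
    →ₗ[k] H ⊗[k] H :=
  TensorProduct.map (Mul1 Hh) (Mul2' Hh) ∘ₗ plumb0

@[simp] lemma Phi0_tmul (c11 q1 q2 c2 d1 d2 b1 b2 : H) :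
    Phi0 Hh ((((c11 ⊗ₜ[k] (q1 ⊗ₜ[k] q2)) ⊗ₜ[k] c2) ⊗ₜ[k] (d1 ⊗ₜ[k] d2)) ⊗ₜ[k] (b1 ⊗ₜ[k] b2))
      = Hh.mul (Hh.mul (Hh.S (Hh.au (Hh.au q1))) (Hh.au.symm b1)) (Hh.au (Hh.au (Hh.au q2)))
        ⊗ₜ[k] Hh.mul (Hh.mul (Hh.S (Hh.au c11)) c2)
          (Hh.mul (Hh.mul (Hh.S (Hh.au.symm d1)) (Hh.au.symm (Hh.au.symm b2))) d2) := by
  simp [Phi0]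

@[simp] lemma Phi1_tmul (c11 q1 q2 c2 d1 d2 b1 b2 : H) :
    Phi1 Hh ((((c11 ⊗ₜ[k] (q1 ⊗ₜ[k] q2)) ⊗ₜ[k] c2) ⊗ₜ[k] (d1 ⊗ₜ[k] d2)) ⊗ₜ[k] (b1 ⊗ₜ[k] b2))
      = Hh.mul (Hh.mul (Hh.S (Hh.au (Hh.au q1))) (Hh.au.symm b1)) (Hh.au (Hh.au (Hh.au q2)))
        ⊗ₜ[k] Hh.mul (Hh.mul (Hh.S (Hh.au c11))
            (Hh.mul (Hh.au.symm (Hh.au.symm (Hh.mul c2 (Hh.S d1))))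
              (Hh.au.symm (Hh.au.symm b2)))) (Hh.au d2) := by
  simp [Phi1]

/-- the left-hand-side context map:
`((x1⊗x2)⊗(y1⊗y2))⊗(b1⊗b2) ↦ (S x2·α⁻¹b1)·(α y1) ⊗ (S x1·α⁻¹b2)·(α y2)` -/
noncomputable def PhiL : ((H ⊗[k] H) ⊗[k] (H ⊗[k] H)) ⊗[k] (H ⊗[k] H) →ₗ[k] H ⊗[k] H :=
  TensorProduct.map (m2 Hh ∘ₗ rTensor H (m2 Hh)) (m2 Hh ∘ₗ rTensor H (m2 Hh))
  ∘ₗ TensorProduct.map (TensorProduct.map (TensorProduct.map Hh.S (A' Hh)) (A Hh))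
      (TensorProduct.map (TensorProduct.map Hh.S (A' Hh)) (A Hh))
  ∘ₗ (TensorProduct.tensorTensorTensorComm k (H ⊗[k] H) (H ⊗[k] H) H H).toLinearMap
  ∘ₗ rTensor (H ⊗[k] H)
      ((TensorProduct.tensorTensorTensorComm k H H H H).toLinearMap
        ∘ₗ TensorProduct.map (TensorProduct.comm k H H).toLinearMap LinearMap.id)
  ∘ₗ (TensorProduct.assoc k (H ⊗[k] H) (H ⊗[k] H) (H ⊗[k] H)).symm.toLinearMap
  ∘ₗ lTensor (H ⊗[k] H) (TensorProduct.comm k (H ⊗[k] H) (H ⊗[k] H)).toLinearMap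
  ∘ₗ (TensorProduct.assoc k (H ⊗[k] H) (H ⊗[k] H) (H ⊗[k] H)).toLinearMap

@[simp] lemma PhiL_tmul (x1 x2 y1 y2 b1 b2 : H) :
    PhiL Hh (((x1 ⊗ₜ[k] x2) ⊗ₜ[k] (y1 ⊗ₜ[k] y2)) ⊗ₜ[k] (b1 ⊗ₜ[k] b2))
      = Hh.mul (Hh.mul (Hh.S x2) (Hh.au.symm b1)) (Hh.au y1)
        ⊗ₜ[k] Hh.mul (Hh.mul (Hh.S x1) (Hh.au.symm b2)) (Hh.au y2) := by
  simp [PhiL]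

lemma hassoc1 (p w z : H) :
    Hh.mul p (Hh.mul w z) = Hh.mul (Hh.mul (Hh.au.symm p) w) (Hh.au z) := by
  have := Hh.hom_assoc (Hh.au.symm p) w z
  simpa using this

lemma hassoc2 (x y c : H) :
    Hh.mul (Hh.mul x y) c = Hh.mul (Hh.au x) (Hh.mul y (Hh.au.symm c)) := by
  have := Hh.hom_assoc x y (Hh.au.symm c)
  simp only [LinearEquiv.apply_symm_apply] at this
  exact this.symm

/-- Step 1 leaf algebra. -/
lemma alg1 (a x sy b z : H) :
    Hh.mul (Hh.mul a x) (Hh.mul (Hh.mul sy b) z)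
      = Hh.mul (Hh.mul a (Hh.mul (Hh.mul (Hh.au.symm (Hh.au.symm x)) (Hh.au.symm sy)) b))
          (Hh.au z) := by
  rw [hassoc1 Hh (Hh.mul a x)]
  rw [au_symm_mul]
  rw [hassoc2 Hh (Hh.au.symm a) (Hh.au.symm x)]
  rw [au_symm_mul]
  rw [hassoc1 Hh (Hh.au.symm x)]
  simp only [LinearEquiv.apply_symm_apply]

lemma Mul2_eq : Mul2 Hh = Mul2' Hh := by
  apply TensorProduct.ext'
  intro C W
  induction C using TensorProduct.induction_on with
  | zero => simp
  | add a b ha hb => simp only [add_tmul, map_add, ha, hb]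
  | tmul c11 c2 =>
    induction W using TensorProduct.induction_on with
    | zero => simp
    | add a b ha hb => simp only [tmul_add, map_add, ha, hb]
    | tmul D d2 =>
      induction D using TensorProduct.induction_on with
      | zero => simp
      | add a b ha hb => simp only [add_tmul, tmul_add, map_add, ha, hb]
      | tmul d1 b2 =>
        simp only [Mul2_tmul, Mul2'_tmul]
        have h3 : Hh.mul (Hh.au.symm (Hh.au.symm c2)) (Hh.au.symm (Hh.S (Hh.au.symm d1)))
            = Hh.au.symm (Hh.au.symm (Hh.mul c2 (Hh.S d1))) := by
          rw [S_au_symm_apply, au_symm_mul Hh c2, au_symm_mul]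
        have h := alg1 Hh (Hh.S (Hh.au c11)) c2 (Hh.S (Hh.au.symm d1))
          (Hh.au.symm (Hh.au.symm b2)) d2
        rw [h, h3]

lemma Phi0_eq_Phi1 : Phi0 Hh = Phi1 Hh := by
  rw [Phi0, Phi1, Mul2_eq]
end HHaux
end AuxHH8
section AuxHH9
open TensorProduct LinearMap
variable {k : Type*} [Field k] {H : Type*} [AddCommGroup H] [Module k H]
namespace HHaux
variable (Hh : HomHopf k H)

/-- reduced form of the adjoint action: `(Δx)⊗a ↦ (S x₁ · α⁻¹a) · α x₂` -/
noncomputable def actF : (H ⊗[k] H) ⊗[k] H →ₗ[k] H :=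
  m2 Hh ∘ₗ TensorProduct.map (m2 Hh ∘ₗ TensorProduct.map Hh.S (A' Hh)) (A Hh) ∘ₗ rho

@[simp] lemma actF_tmul (x1 x2 a : H) :
    actF Hh ((x1 ⊗ₜ[k] x2) ⊗ₜ[k] a)
      = Hh.mul (Hh.mul (Hh.S x1) (Hh.au.symm a)) (Hh.au x2) := by
  simp [actF]

lemma adActT_eq (x a : H) :
    adActT Hh.au Hh.mul Hh.comul Hh.S (x ⊗ₜ[k] a) = actF Hh (Hh.comul x ⊗ₜ[k] a) := by
  simp only [adActT, coe_comp, Function.comp_apply, rTensor_tmul, LinearEquiv.coe_coe]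
  generalize Hh.comul x = s
  induction s using TensorProduct.induction_on with
  | zero => simp
  | add a' b' ha hb => simp only [map_add, add_tmul, ha, hb]
  | tmul x1 x2 => simp

lemma adAct_eq (x a : H) :
    adAct Hh.au Hh.mul Hh.comul Hh.S x a = actF Hh (Hh.comul x ⊗ₜ[k] a) := by
  rw [adAct, TensorProduct.curry_apply, adActT_eq]

/-- reduced form of the adjoint coaction: `(Δx₁)⊗x₂ ↦ α x₁₂ ⊗ (S x₁₁ · α⁻¹ x₂)` -/
noncomputable def coF : (H ⊗[k] H) ⊗[k] H →ₗ[k] H ⊗[k] H :=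
  TensorProduct.map (A Hh) (m2 Hh ∘ₗ TensorProduct.map Hh.S (A' Hh))
  ∘ₗ (TensorProduct.assoc k H H H).toLinearMap
  ∘ₗ rTensor H (TensorProduct.comm k H H).toLinearMap

@[simp] lemma coF_tmul (p q r : H) :
    coF Hh ((p ⊗ₜ[k] q) ⊗ₜ[k] r)
      = Hh.au q ⊗ₜ[k] Hh.mul (Hh.S p) (Hh.au.symm r) := by
  simp [coF]

lemma adCoact_eq (x : H) :
    adCoact Hh.au Hh.mul Hh.comul Hh.S x = coF Hh (rTensor H Hh.comul (Hh.comul x)) := by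
  simp only [adCoact, coF, coe_comp, Function.comp_apply, LinearEquiv.coe_coe]
  generalize rTensor H Hh.comul (Hh.comul x) = s
  induction s using TensorProduct.induction_on with
  | zero => simp
  | add a' b' ha hb => simp only [map_add, ha, hb]
  | tmul u r =>
    induction u using TensorProduct.induction_on with
    | zero => simp
    | add a' b' ha hb => simp only [map_add, add_tmul, ha, hb]
    | tmul p q => simp

noncomputable def XC : H →ₗ[k] (H ⊗[k] (H ⊗[k] H)) ⊗[k] H :=
  rTensor H (cL Hh) ∘ₗ Hh.comul

/-- five-fold version of `comul_mul` -/
lemma L5 (U V W : H ⊗[k] H) :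
    M2 Hh (M2 Hh ((TensorProduct.comm k H H) (TensorProduct.map Hh.S Hh.S U)
        ⊗ₜ[k] TensorProduct.map (A' Hh) (A' Hh) W)
      ⊗ₜ[k] TensorProduct.map (A Hh) (A Hh) V)
    = PhiL Hh ((U ⊗ₜ[k] V) ⊗ₜ[k] W) := by
  induction U using TensorProduct.induction_on with
  | zero => simp
  | add a' b' ha hb => simp only [map_add, add_tmul, ha, hb]
  | tmul x1 x2 =>
    induction V using TensorProduct.induction_on with
    | zero => simp
    | add a' b' ha hb => simp only [map_add, add_tmul, tmul_add, ha, hb]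
    | tmul y1 y2 =>
      induction W using TensorProduct.induction_on with
      | zero => simp
      | add a' b' ha hb => simp only [map_add, add_tmul, tmul_add, ha, hb]
      | tmul b1 b2 => simp

/-- LHS reduction -/
lemma lred : ∀ (t : H ⊗[k] H) (b : H),
    Hh.comul (actF Hh (t ⊗ₜ[k] b))
      = PhiL Hh (TensorProduct.map Hh.comul Hh.comul t ⊗ₜ[k] Hh.comul b) := by
  intro t b
  induction t using TensorProduct.induction_on with
  | zero => simp
  | add a' b' ha hb => simp only [map_add, add_tmul, ha, hb]
  | tmul x y =>
    rw [actF_tmul]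
    have c1 : Hh.comul (Hh.mul (Hh.mul (Hh.S x) (Hh.au.symm b)) (Hh.au y))
        = M2 Hh (Hh.comul (Hh.mul (Hh.S x) (Hh.au.symm b)) ⊗ₜ[k] Hh.comul (Hh.au y)) := by
      simpa [M2, m2] using Hh.comul_mul (Hh.mul (Hh.S x) (Hh.au.symm b)) (Hh.au y)
    have c2 : Hh.comul (Hh.mul (Hh.S x) (Hh.au.symm b))
        = M2 Hh (Hh.comul (Hh.S x) ⊗ₜ[k] Hh.comul (Hh.au.symm b)) := by
      simpa [M2, m2] using Hh.comul_mul (Hh.S x) (Hh.au.symm b)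
    rw [c1, c2]
    have c3 : Hh.comul (Hh.S x) = (TensorProduct.comm k H H) (TensorProduct.map Hh.S Hh.S (Hh.comul x)) := by
      have := LinearMap.congr_fun (S_anticomul Hh) x
      simpa [tSS] using this
    rw [c3, comul_au_symm, Hh.comul_au]
    have c4 : TensorProduct.map Hh.au.toLinearMap Hh.au.toLinearMap (Hh.comul y)
        = TensorProduct.map (A Hh) (A Hh) (Hh.comul y) := rfl
    rw [c4, L5]
    simp

end HHaux
end AuxHH9
section AuxHH10
open TensorProduct LinearMap
variable {k : Type*} [Field k] {H : Type*} [AddCommGroup H] [Module k H]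
namespace HHaux
variable (Hh : HomHopf k H)

set_option maxHeartbeats 1000000 in
lemma rU (t u : H ⊗[k] H) :
    (LinearMap.lTensor H (TensorProduct.lift Hh.mul))
      ((TensorProduct.assoc k H H H)
        ((TensorProduct.map
            (TensorProduct.map (TensorProduct.lift (adAct Hh.au Hh.mul Hh.comul Hh.S ∘ₗ Hh.au.toLinearMap)) Hh.au.toLinearMap ∘ₗ
              (TensorProduct.assoc k H H H).symm.toLinearMap ∘ₗ
                LinearMap.lTensor H (TensorProduct.comm k H H).toLinearMap ∘ₗ
                  (TensorProduct.assoc k H H H).toLinearMap ∘ₗ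
                    LinearMap.rTensor H (adCoact Hh.au Hh.mul Hh.comul Hh.S))
            (TensorProduct.lift (adAct Hh.au Hh.mul Hh.comul Hh.S) ∘ₗ
              TensorProduct.map Hh.au.symm.toLinearMap Hh.au.symm.toLinearMap))
          ((TensorProduct.tensorTensorTensorComm k H H H H) (t ⊗ₜ[k] u))))
    = Phi0 Hh (TensorProduct.map (XC Hh) Hh.comul t ⊗ₜ[k] u) := by
  induction t using TensorProduct.induction_on with
  | zero => simp
  | add a' b' ha hb => simp only [map_add, add_tmul, ha, hb]
  | tmul h1 h2 =>
    induction u using TensorProduct.induction_on with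
    | zero => simp
    | add a' b' ha hb => simp only [map_add, tmul_add, ha, hb]
    | tmul b1 b2 =>
      simp only [tensorTensorTensorComm_tmul, map_tmul, coe_comp, Function.comp_apply,
        LinearEquiv.coe_coe, rTensor_tmul, lift.tmul, A'_apply]
      rw [adCoact_eq, adAct_eq, comul_au_symm]
      simp only [XC, coe_comp, Function.comp_apply]
      generalize Hh.comul h1 = s
      induction s using TensorProduct.induction_on with
      | zero => simp
      | add a' b' ha hb => simp only [map_add, add_tmul, ha, hb]
      | tmul y1 y2 =>
        simp only [rTensor_tmul, cL, coe_comp, Function.comp_apply]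
        generalize Hh.comul y1 = w
        induction w using TensorProduct.induction_on with
        | zero => simp
        | add a' b' ha hb => simp only [map_add, add_tmul, ha, hb]
        | tmul a c =>
          simp only [coF_tmul, lTensor_tmul, assoc_tmul, LinearEquiv.coe_coe,
            comm_tmul, assoc_symm_tmul, map_tmul, lift.tmul, coe_comp,
            Function.comp_apply, A_apply]
          rw [adAct_eq, Hh.comul_au, Hh.comul_au]
          generalize Hh.comul c = v
          induction v using TensorProduct.induction_on with
          | zero => simp
          | add a' b' ha hb => simp only [map_add, add_tmul, tmul_add, ha, hb]
          | tmul q1 q2 =>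
            generalize Hh.comul h2 = r
            induction r using TensorProduct.induction_on with
            | zero => simp
            | add a' b' ha hb => simp only [map_add, add_tmul, tmul_add, ha, hb]
            | tmul r1 r2 =>
              simp only [map_tmul, actF_tmul, A_apply, A'_apply, Phi0_tmul,
                lTensor_tmul, assoc_tmul, LinearEquiv.coe_coe, m2_tmul,
                LinearEquiv.apply_symm_apply, LinearEquiv.symm_apply_apply]
              simp [Hh.au_mul, S_au_apply]
end HHaux
end AuxHH10
section AuxHH11
open TensorProduct LinearMap
variable {k : Type*} [Field k] {H : Type*} [AddCommGroup H] [Module k H]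
namespace HHaux
variable (Hh : HomHopf k H)

/-- `(t1⊗(t2⊗t3))⊗(z'⊗(b1⊗b2)) ↦ ((t2⊗b1)⊗t3)⊗((t1⊗b2)⊗z')` -/
noncomputable def sigV : (H ⊗[k] (H ⊗[k] H)) ⊗[k] (H ⊗[k] (H ⊗[k] H))
    →ₗ[k] ((H ⊗[k] H) ⊗[k] H) ⊗[k] ((H ⊗[k] H) ⊗[k] H) :=
  TensorProduct.map rho
      ((TensorProduct.assoc k H H H).symm.toLinearMap ∘ₗ lTensor H (TensorProduct.comm k H H).toLinearMap)
  ∘ₗ (TensorProduct.tensorTensorTensorComm k (H ⊗[k] H) H H (H ⊗[k] H)).toLinearMap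
  ∘ₗ rTensor (H ⊗[k] (H ⊗[k] H)) (TensorProduct.comm k H (H ⊗[k] H)).toLinearMap
  ∘ₗ lTensor (H ⊗[k] (H ⊗[k] H)) swp

@[simp] lemma sigV_tmul (t1 t2 t3 z' b1 b2 : H) :
    sigV (k := k) ((t1 ⊗ₜ[k] (t2 ⊗ₜ[k] t3)) ⊗ₜ[k] (z' ⊗ₜ[k] (b1 ⊗ₜ[k] b2)))
      = ((t2 ⊗ₜ[k] b1) ⊗ₜ[k] t3) ⊗ₜ[k] ((t1 ⊗ₜ[k] b2) ⊗ₜ[k] z') := by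
  simp [sigV]

noncomputable def VALc : (H ⊗[k] (H ⊗[k] H)) ⊗[k] (H ⊗[k] (H ⊗[k] H)) →ₗ[k] H ⊗[k] H :=
  TensorProduct.map (Mul1 Hh)
    (m2 Hh ∘ₗ TensorProduct.map (m2 Hh ∘ₗ TensorProduct.map (uSA Hh) (A' Hh)) (A Hh))
  ∘ₗ sigV

@[simp] lemma VALc_tmul (t1 t2 t3 z' b1 b2 : H) :
    VALc Hh ((t1 ⊗ₜ[k] (t2 ⊗ₜ[k] t3)) ⊗ₜ[k] (z' ⊗ₜ[k] (b1 ⊗ₜ[k] b2)))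
      = Hh.mul (Hh.mul (Hh.S (Hh.au (Hh.au t2))) (Hh.au.symm b1)) (Hh.au (Hh.au (Hh.au t3)))
        ⊗ₜ[k] Hh.mul (Hh.mul (Hh.S (Hh.au t1)) (Hh.au.symm b2)) (Hh.au z') := by
  simp [VALc]

noncomputable def PhiC : ((H ⊗[k] (H ⊗[k] H)) ⊗[k] k) ⊗[k] (H ⊗[k] (H ⊗[k] H)) →ₗ[k] H ⊗[k] H :=
  (TensorProduct.lid k (H ⊗[k] H)).toLinearMap
  ∘ₗ lTensor k (VALc Hh)
  ∘ₗ (TensorProduct.comm k ((H ⊗[k] (H ⊗[k] H)) ⊗[k] (H ⊗[k] (H ⊗[k] H))) k).toLinearMap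
  ∘ₗ rho

@[simp] lemma PhiC_tmul (T : H ⊗[k] (H ⊗[k] H)) (c : k) (R : H ⊗[k] (H ⊗[k] H)) :
    PhiC Hh ((T ⊗ₜ[k] c) ⊗ₜ[k] R) = c • VALc Hh (T ⊗ₜ[k] R) := by
  simp [PhiC]

noncomputable def a2chain : H ⊗[k] (H ⊗[k] (H ⊗[k] H)) →ₗ[k] H ⊗[k] ((H ⊗[k] H) ⊗[k] H) :=
  lTensor H ((TensorProduct.assoc k H H H).symm.toLinearMap ∘ₗ lTensor H (TensorProduct.comm k H H).toLinearMap)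
  ∘ₗ swp
  ∘ₗ lTensor H swp

@[simp] lemma a2chain_tmul (w z' b1 b2 : H) :
    a2chain (k := k) (w ⊗ₜ[k] (z' ⊗ₜ[k] (b1 ⊗ₜ[k] b2)))
      = b1 ⊗ₜ[k] ((w ⊗ₜ[k] b2) ⊗ₜ[k] z') := by
  simp [a2chain]

noncomputable def PhiQ : H ⊗[k] ((H ⊗[k] (H ⊗[k] H)) ⊗[k] (H ⊗[k] (H ⊗[k] H))) →ₗ[k] H ⊗[k] H :=
  TensorProduct.map (Mul1 Hh ∘ₗ rho)
    (m2 Hh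
      ∘ₗ TensorProduct.map
          (m2 Hh ∘ₗ TensorProduct.map (uSA Hh) (m2 Hh ∘ₗ TensorProduct.map (A' Hh) (uA'2 Hh)))
          (A Hh)
      ∘ₗ (TensorProduct.assoc k H (H ⊗[k] H) H).symm.toLinearMap)
  ∘ₗ (TensorProduct.tensorTensorTensorComm k (H ⊗[k] H) H H ((H ⊗[k] H) ⊗[k] H)).toLinearMap
  ∘ₗ rTensor (H ⊗[k] ((H ⊗[k] H) ⊗[k] H)) (TensorProduct.comm k H (H ⊗[k] H)).toLinearMap
  ∘ₗ lTensor (H ⊗[k] (H ⊗[k] H)) a2chain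
  ∘ₗ swp

@[simp] lemma PhiQ_tmul (w t1 t2 t3 z' b1 b2 : H) :
    PhiQ Hh (w ⊗ₜ[k] ((t1 ⊗ₜ[k] (t2 ⊗ₜ[k] t3)) ⊗ₜ[k] (z' ⊗ₜ[k] (b1 ⊗ₜ[k] b2))))
      = Hh.mul (Hh.mul (Hh.S (Hh.au (Hh.au t2))) (Hh.au.symm b1)) (Hh.au (Hh.au (Hh.au t3)))
        ⊗ₜ[k] Hh.mul (Hh.mul (Hh.S (Hh.au t1))
            (Hh.mul (Hh.au.symm w) (Hh.au.symm (Hh.au.symm b2)))) (Hh.au z') := by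
  simp [PhiQ]

end HHaux
end AuxHH11
section AuxHH12
open TensorProduct LinearMap
variable {k : Type*} [Field k] {H : Type*} [AddCommGroup H] [Module k H]
namespace HHaux
variable (Hh : HomHopf k H)

lemma pA (s : H ⊗[k] H) (z : H) :
    TensorProduct.map (XC Hh) LinearMap.id
        (TensorProduct.map (A Hh) LinearMap.id
          ((TensorProduct.assoc k H H H)
            (TensorProduct.map LinearMap.id (A' Hh) (s ⊗ₜ[k] z))))
      = TensorProduct.map (rTensor H (cL Hh) ∘ₗ TensorProduct.map (A Hh) (A Hh)) LinearMap.id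
          ((TensorProduct.assoc k (H ⊗[k] H) H H)
            ((rTensor H Hh.comul s) ⊗ₜ[k] Hh.au.symm z)) := by
  induction s using TensorProduct.induction_on with
  | zero => simp
  | add a' b' ha hb => simp only [map_add, add_tmul, ha, hb]
  | tmul p q =>
    simp only [map_tmul, id_coe, id_eq, A'_apply, A_apply, LinearEquiv.coe_coe,
      assoc_tmul, rTensor_tmul, coe_comp, Function.comp_apply, XC]
    rw [Hh.comul_au]
    rfl

lemma EqS2'' (q : H) :
    m2 Hh (TensorProduct.map LinearMap.id Hh.S (Hh.comul q)) = Hh.counit q • Hh.one := by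
  simpa [m2] using Hh.id_mul_S q

lemma pC1 (p z' : H) (u : H ⊗[k] H) (m : H ⊗[k] H) :
    Phi1 Hh (TensorProduct.map (rTensor H (cL Hh) ∘ₗ TensorProduct.map (A Hh) (A Hh)) LinearMap.id
        ((TensorProduct.assoc k (H ⊗[k] H) H H)
          ((TensorProduct.map LinearMap.id (A Hh)
            ((TensorProduct.assoc k H H H).symm
              (Hh.au.symm p ⊗ₜ[k] m))) ⊗ₜ[k] z'))
      ⊗ₜ[k] u)
    = PhiQ Hh ((m2 Hh (TensorProduct.map LinearMap.id Hh.S m))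
        ⊗ₜ[k] ((cL Hh p) ⊗ₜ[k] (z' ⊗ₜ[k] u))) := by
  induction m using TensorProduct.induction_on with
  | zero => simp
  | add a' b' ha hb => simp only [map_add, add_tmul, tmul_add, ha, hb]
  | tmul m1 m2' =>
    simp only [map_tmul, id_coe, id_eq, A'_apply, A_apply, LinearEquiv.coe_coe,
      assoc_symm_tmul, assoc_tmul, rTensor_tmul, coe_comp, Function.comp_apply,
      LinearEquiv.apply_symm_apply, m2_tmul]
    generalize cL Hh p = T
    induction u using TensorProduct.induction_on with
    | zero => simp
    | add a' b' ha hb => simp only [map_add, tmul_add, ha, hb]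
    | tmul b1 b2 =>
      induction T using TensorProduct.induction_on with
      | zero => simp
      | add a' b' ha hb => simp only [map_add, add_tmul, tmul_add, ha, hb]
      | tmul t1 Q =>
        induction Q using TensorProduct.induction_on with
        | zero => simp
        | add a' b' ha hb => simp only [map_add, add_tmul, tmul_add, ha, hb]
        | tmul t2 t3 =>
          have key : Hh.au.symm (Hh.au.symm (Hh.mul (Hh.au m1) (Hh.S (Hh.au m2'))))
              = Hh.au.symm (Hh.mul m1 (Hh.S m2')) := by
            rw [S_au_apply Hh m2', ← Hh.au_mul]
            simp
          simp only [Phi1_tmul, PhiQ_tmul, key]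
lemma pC2 (T : H ⊗[k] (H ⊗[k] H)) (z' : H) (u : H ⊗[k] H) (c : k) :
    c • PhiQ Hh (Hh.one ⊗ₜ[k] (T ⊗ₜ[k] (z' ⊗ₜ[k] u)))
      = PhiC Hh ((T ⊗ₜ[k] c) ⊗ₜ[k] (z' ⊗ₜ[k] u)) := by
  rw [PhiC_tmul]
  congr 1
  induction T using TensorProduct.induction_on with
  | zero => simp
  | add a' b' ha hb => simp only [map_add, add_tmul, tmul_add, ha, hb]
  | tmul t1 Q =>
    induction Q using TensorProduct.induction_on with
    | zero => simp
    | add a' b' ha hb => simp only [map_add, add_tmul, tmul_add, ha, hb]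
    | tmul t2 t3 =>
      induction u using TensorProduct.induction_on with
      | zero => simp
      | add a' b' ha hb => simp only [map_add, tmul_add, ha, hb]
      | tmul b1 b2 =>
        simp only [PhiQ_tmul, VALc_tmul, au_symm_one]
        congr 2
        rw [Hh.one_mul']
        simp

lemma pC (s₂ : H ⊗[k] H) (z' : H) (u : H ⊗[k] H) :
    Phi1 Hh (TensorProduct.map (rTensor H (cL Hh) ∘ₗ TensorProduct.map (A Hh) (A Hh)) LinearMap.id
        ((TensorProduct.assoc k (H ⊗[k] H) H H)
          ((TensorProduct.map LinearMap.id (A Hh)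
            ((TensorProduct.assoc k H H H).symm
              (TensorProduct.map (A' Hh) LinearMap.id (lTensor H Hh.comul s₂)))) ⊗ₜ[k] z'))
      ⊗ₜ[k] u)
    = PhiC Hh ((rTensor k (cL Hh) (TensorProduct.map LinearMap.id Hh.counit s₂))
        ⊗ₜ[k] (z' ⊗ₜ[k] u)) := by
  induction s₂ using TensorProduct.induction_on with
  | zero => simp
  | add a' b' ha hb => simp only [map_add, add_tmul, ha, hb]
  | tmul p q =>
    simp only [lTensor_tmul, map_tmul, rTensor_tmul, id_coe, id_eq, A'_apply]
    rw [pC1 Hh p z' u (Hh.comul q), EqS2'' Hh q, ← TensorProduct.smul_tmul',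
      LinearMap.map_smul, pC2]

lemma pD1 (s : H ⊗[k] H) :
    lTensor H Hh.comul (TensorProduct.map (A' Hh) (A' Hh) s)
      = TensorProduct.map (A' Hh) (TensorProduct.map (A' Hh) (A' Hh)) (lTensor H Hh.comul s) := by
  induction s using TensorProduct.induction_on with
  | zero => simp
  | add a' b' ha hb => simp only [map_add, ha, hb]
  | tmul y1 y2 =>
    simp only [map_tmul, lTensor_tmul, A'_apply]
    rw [comul_au_symm]

lemma EqE1' (y : H) :
    TensorProduct.map LinearMap.id Hh.counit (Hh.comul y)
      = Hh.au.symm y ⊗ₜ[k] (1 : k) := by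
  have := LinearMap.congr_fun (EqE1 Hh) y
  simp only [coe_comp, Function.comp_apply, LinearEquiv.coe_coe, A'_apply] at this
  rw [this, TensorProduct.rid_symm_apply]

lemma pE (s : H ⊗[k] H) (z : H) (u : H ⊗[k] H) :
    PhiC Hh ((TensorProduct.map (A' Hh) (TensorProduct.map (A' Hh) (A' Hh))
          (TensorProduct.map (A Hh) LinearMap.id
            ((TensorProduct.assoc k H H H)
              (TensorProduct.map LinearMap.id (A' Hh) (rTensor H Hh.comul s)))) ⊗ₜ[k] (1 : k))
        ⊗ₜ[k] (Hh.au.symm z ⊗ₜ[k] u))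
    = PhiL Hh (TensorProduct.map Hh.comul LinearMap.id
        (TensorProduct.map (A Hh) LinearMap.id
          ((TensorProduct.assoc k H H H)
            (TensorProduct.map LinearMap.id (A' Hh) (s ⊗ₜ[k] z)))) ⊗ₜ[k] u) := by
  induction s using TensorProduct.induction_on with
  | zero => simp
  | add a' b' ha hb => simp only [map_add, add_tmul, ha, hb]
  | tmul y1 y2 =>
    simp only [map_tmul, rTensor_tmul, id_coe, id_eq, A'_apply, A_apply,
      LinearEquiv.coe_coe, assoc_tmul]
    rw [Hh.comul_au]
    generalize Hh.comul y1 = w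
    induction w using TensorProduct.induction_on with
    | zero => simp
    | add a' b' ha hb => simp only [map_add, add_tmul, ha, hb]
    | tmul w1 w2 =>
      induction u using TensorProduct.induction_on with
      | zero => simp
      | add a' b' ha hb => simp only [map_add, tmul_add, ha, hb]
      | tmul b1 b2 =>
        simp only [map_tmul, assoc_tmul, LinearEquiv.coe_coe, id_coe, id_eq,
          A_apply, A'_apply, PhiC_tmul, VALc_tmul, PhiL_tmul, one_smul,
          LinearEquiv.apply_symm_apply, LinearEquiv.symm_apply_apply]

lemma qsplit {X : Type*} [AddCommGroup X] [Module k X] (F : H →ₗ[k] X) (t : H ⊗[k] H) :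
    TensorProduct.map F Hh.comul t
      = TensorProduct.map F LinearMap.id (lTensor H Hh.comul t) := by
  induction t using TensorProduct.induction_on with
  | zero => simp
  | add a' b' ha hb => simp only [map_add, ha, hb]
  | tmul x y => simp

lemma MEGA (t u : H ⊗[k] H) :
    Phi1 Hh (TensorProduct.map (XC Hh) LinearMap.id
        (TensorProduct.map (A Hh) LinearMap.id
          ((TensorProduct.assoc k H H H)
            (TensorProduct.map LinearMap.id (A' Hh) (rTensor H Hh.comul t)))) ⊗ₜ[k] u)
    = PhiL Hh (TensorProduct.map Hh.comul LinearMap.id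
        (TensorProduct.map (A Hh) LinearMap.id
          ((TensorProduct.assoc k H H H)
            (TensorProduct.map LinearMap.id (A' Hh) (rTensor H Hh.comul t)))) ⊗ₜ[k] u) := by
  induction t using TensorProduct.induction_on with
  | zero => simp
  | add a' b' ha hb => simp only [map_add, add_tmul, ha, hb]
  | tmul y z =>
    simp only [rTensor_tmul]
    rw [pA Hh (Hh.comul y) z, EqC2' Hh y, pC Hh (Hh.comul y) (Hh.au.symm z) u,
      EqE1' Hh y]
    simp only [rTensor_tmul]
    have hcl : cL Hh (Hh.au.symm y)
        = TensorProduct.map (A' Hh) (TensorProduct.map (A' Hh) (A' Hh))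
            (lTensor H Hh.comul (Hh.comul y)) := by
      simp only [cL, coe_comp, Function.comp_apply]
      rw [comul_au_symm, pD1]
    rw [hcl, EqC1' Hh y, pE Hh (Hh.comul y) z u]
end HHaux
end AuxHH12

open HHaux

/-- For the action `h·a = (S(h₁)α⁻¹(a))α(h₂)` and coaction
`ρ(h) = α(h₁₂) ⊗ S(h₁₁)α⁻¹(h₂)` of Proposition 3.3, the bicrossproduct condition (a)
holds: `Δ(h·a) = Σ α(h₁₍₀₎)·a₁ ⊗ α(h₁₍₁₎)(α⁻¹(h₂)·α⁻¹(a₂))`. -/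
theorem adjoint_bicross_condA
    {k : Type*} [Field k] {H : Type*} [AddCommGroup H] [Module k H]
    (Hh : HomHopf k H) :
    bicrossCondA Hh.au Hh.mul Hh.comul Hh.au Hh.comul
      (adAct Hh.au Hh.mul Hh.comul Hh.S) (adCoact Hh.au Hh.mul Hh.comul Hh.S) := by
  intro h b
  simp only [coe_comp, Function.comp_apply, LinearEquiv.coe_coe]
  rw [adAct_eq, lred, rU, Phi0_eq_Phi1,
    qsplit Hh Hh.comul (Hh.comul h)]
  have hx := qsplit (X := (H ⊗[k] (H ⊗[k] H)) ⊗[k] H) Hh (XC Hh) (Hh.comul h)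
  rw [hx, EqC1' Hh h]
  exact (MEGA Hh (Hh.comul h) (Hh.comul b)).symm
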